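/- If G is a k-regular graph on n vertices, then the Sombor index of the m-splitting graph Spl_m(G) equals SO(G)·(m√(2m²+4m+4) + (m+1)), i.e. (nk²/√2)·(m√(2m²+4m+4) + (m+1)). -/

import Mathlib

open Finset Matrix Polynomial Kronecker

noncomputable def somborIndex {V : Type*} [Fintype V] [DecidableEq V]
    (G : SimpleGraph V) [DecidableRel G.Adj] : ℝ :=
  ∑ e ∈ G.edgeFinset,
    Sym2.lift ⟨fun u v => Real.sqrt ((G.degree u : ℝ) ^ 2 + (G.degree v : ℝ) ^ 2),
      fun u v => by simp [add_comm]⟩ e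

/-- The `m`-splitting graph: vertices `(v, 0)` are the original vertices, and
`(v, j)` for `j ≠ 0` are the `m` added copies of `v`, adjacent to the neighbors of `v`. -/
def splittingGraph {V : Type*} (G : SimpleGraph V) (m : ℕ) :
    SimpleGraph (V × Fin (m + 1)) where
  Adj p q := G.Adj p.1 q.1 ∧ (p.2 = 0 ∨ q.2 = 0)
  symm := ⟨fun p q h => ⟨h.1.symm, h.2.symm⟩⟩
  loopless := ⟨fun p h => G.loopless.irrefl p.1 h.1⟩

instance {V : Type*} (G : SimpleGraph V) [DecidableRel G.Adj] (m : ℕ) :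
    DecidableRel (splittingGraph G m).Adj :=
  fun _ _ => inferInstanceAs (Decidable (_ ∧ _))

/-- The `m`-shadow graph: `m` copies of `G`, with each vertex joined to the neighbors of
the corresponding vertex in every copy. -/
def shadowGraph {V : Type*} (G : SimpleGraph V) (m : ℕ) :
    SimpleGraph (V × Fin m) where
  Adj p q := G.Adj p.1 q.1
  symm := ⟨fun _ _ h => h.symm⟩
  loopless := ⟨fun p h => G.loopless.irrefl p.1 h⟩

instance {V : Type*} (G : SimpleGraph V) [DecidableRel G.Adj] (m : ℕ) :
    DecidableRel (shadowGraph G m).Adj :=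
  fun p q => inferInstanceAs (Decidable (G.Adj p.1 q.1))

noncomputable def somborMatrix {V : Type*} [Fintype V] [DecidableEq V]
    (G : SimpleGraph V) [DecidableRel G.Adj] : Matrix V V ℝ :=
  Matrix.of fun u v =>
    if G.Adj u v then Real.sqrt ((G.degree u : ℝ) ^ 2 + (G.degree v : ℝ) ^ 2) else 0

lemma sum_edgeFinset_lift {W : Type*} [Fintype W] [DecidableEq W]
    (H : SimpleGraph W) [DecidableRel H.Adj] (f : W → W → ℝ)
    (hf : ∀ u v, f u v = f v u) :
    (2 : ℝ) * ∑ e ∈ H.edgeFinset, Sym2.lift ⟨f, hf⟩ e =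
      ∑ p, ∑ q, if H.Adj p q then f p q else 0 := by
  have h1 : ∑ p, ∑ q, (if H.Adj p q then f p q else 0)
      = ∑ d : H.Dart, f d.fst d.snd := by
    rw [← Fintype.sum_prod_type', ← Finset.sum_filter]
    refine (Finset.sum_bij (fun (d : H.Dart) _ => d.toProd) ?_ ?_ ?_ ?_).symm
    · intro d _; simp [d.adj]
    · intro d₁ _ d₂ _ h; exact SimpleGraph.Dart.ext _ _ h
    · intro x hx
      exact ⟨⟨x, (Finset.mem_filter.mp hx).2⟩, Finset.mem_univ _, rfl⟩
    · intro d _; rfl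
  have h2 : ∑ d : H.Dart, f d.fst d.snd = ∑ d : H.Dart, Sym2.lift ⟨f, hf⟩ d.edge := rfl
  rw [h1, h2]
  rw [← Finset.sum_fiberwise_of_maps_to (g := SimpleGraph.Dart.edge)
      (fun d _ => SimpleGraph.mem_edgeFinset.mpr d.edge_mem),
    Finset.mul_sum]
  refine Finset.sum_congr rfl fun e he => ?_
  rw [Finset.sum_congr rfl (fun d hd => by
      rw [(Finset.mem_filter.mp hd).2]), Finset.sum_const, nsmul_eq_mul]
  have : #({d : H.Dart | d.edge = e} : Finset _) = 2 :=
    H.dart_edge_fiber_card e (SimpleGraph.mem_edgeFinset.mp he)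
  rw [show Finset.univ.filter (fun d : H.Dart => d.edge = e)
      = ({d : H.Dart | d.edge = e} : Finset _) from rfl, this]
  norm_num

lemma splitting_degree {V : Type*} [Fintype V] [DecidableEq V]
    (G : SimpleGraph V) [DecidableRel G.Adj] {k : ℕ} (m : ℕ)
    (hreg : G.IsRegularOfDegree k) (v : V) (i : Fin (m + 1)) :
    (splittingGraph G m).degree (v, i) = if i = 0 then (m + 1) * k else k := by
  rcases eq_or_ne i 0 with hi | hi
  · subst hi
    have hnf : (splittingGraph G m).neighborFinset (v, 0)
        = G.neighborFinset v ×ˢ Finset.univ := by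
      ext ⟨u, j⟩
      rw [SimpleGraph.mem_neighborFinset]
      simp [SimpleGraph.mem_neighborFinset, splittingGraph]
    rw [if_pos rfl, ← SimpleGraph.card_neighborFinset_eq_degree, hnf,
      Finset.card_product, Finset.card_univ, Fintype.card_fin,
      SimpleGraph.card_neighborFinset_eq_degree, hreg v, mul_comm]
  · have hnf : (splittingGraph G m).neighborFinset (v, i)
        = G.neighborFinset v ×ˢ {0} := by
      ext ⟨u, j⟩
      rw [SimpleGraph.mem_neighborFinset]
      simp [SimpleGraph.mem_neighborFinset, splittingGraph, hi]
      aesop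
    rw [if_neg hi, ← SimpleGraph.card_neighborFinset_eq_degree, hnf,
      Finset.card_product, Finset.card_singleton,
      SimpleGraph.card_neighborFinset_eq_degree, hreg v, mul_one]


theorem sombor_index_splitting {V : Type*} [Fintype V] [DecidableEq V]
    (G : SimpleGraph V) [DecidableRel G.Adj] (k m : ℕ)
    (hreg : G.IsRegularOfDegree k) :
    somborIndex (splittingGraph G m) =
      ((Fintype.card V : ℝ) * (k : ℝ) ^ 2 / Real.sqrt 2) *
        ((m : ℝ) * Real.sqrt (2 * (m : ℝ) ^ 2 + 4 * m + 4) + (m + 1)) := by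
  classical
  have hH : splittingGraph G m = splittingGraph G m := rfl
  set H := splittingGraph G m with hHdef
  have key := sum_edgeFinset_lift H
      (fun p q => Real.sqrt ((H.degree p : ℝ) ^ 2 + (H.degree q : ℝ) ^ 2))
      (fun u v => by simp [add_comm])
  have hSI : somborIndex H =
      (∑ p, ∑ q, if H.Adj p q then
        Real.sqrt ((H.degree p : ℝ) ^ 2 + (H.degree q : ℝ) ^ 2) else 0) / 2 := by
    rw [eq_div_iff (two_ne_zero), mul_comm]
    exact key
  set c : Fin (m + 1) → ℝ := fun i => if i = 0 then ((m : ℝ) + 1) * k else (k : ℝ) with hc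
  have hdeg : ∀ (v : V) (i : Fin (m + 1)), ((H.degree (v, i) : ℝ)) = c i := by
    intro v i
    rw [show H.degree (v, i) = if i = 0 then (m + 1) * k else k from
      splitting_degree G m hreg v i]
    rcases eq_or_ne i 0 with hi | hi <;> simp [hc, hi] <;> push_cast <;> ring
  set S0 : ℝ := ∑ i : Fin (m + 1), ∑ j : Fin (m + 1),
      if (i = 0 ∨ j = 0) then Real.sqrt (c i ^ 2 + c j ^ 2) else 0 with hS0def
  have hT : (∑ p, ∑ q, if H.Adj p q then
        Real.sqrt ((H.degree p : ℝ) ^ 2 + (H.degree q : ℝ) ^ 2) else 0)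
      = ∑ u : V, ∑ v : V, (if G.Adj u v then S0 else 0) := by
    rw [Fintype.sum_prod_type]
    calc ∑ u, ∑ i, ∑ q, (if H.Adj (u, i) q then
            Real.sqrt ((H.degree (u, i) : ℝ) ^ 2 + (H.degree q : ℝ) ^ 2) else 0)
        = ∑ u, ∑ i : Fin (m + 1), ∑ v, ∑ j : Fin (m + 1),
            (if G.Adj u v ∧ (i = 0 ∨ j = 0) then Real.sqrt (c i ^ 2 + c j ^ 2) else 0) := by
          refine Finset.sum_congr rfl fun u _ => Finset.sum_congr rfl fun i _ => ?_
          rw [Fintype.sum_prod_type]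
          refine Finset.sum_congr rfl fun v _ => Finset.sum_congr rfl fun j _ => ?_
          rw [hdeg, hdeg]
          rfl
      _ = ∑ u : V, ∑ v : V, (if G.Adj u v then S0 else 0) := by
          refine Finset.sum_congr rfl fun u _ => ?_
          rw [Finset.sum_comm]
          refine Finset.sum_congr rfl fun v _ => ?_
          by_cases hA : G.Adj u v <;> simp [hA, hS0def]
  have hc0 : c 0 = ((m : ℝ) + 1) * k := by simp [hc]
  have hcs : ∀ i : Fin m, c i.succ = (k : ℝ) := by
    intro i; simp [hc, Fin.succ_ne_zero]
  have hS0 : S0 = Real.sqrt (c 0 ^ 2 + c 0 ^ 2)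
      + (m : ℝ) * Real.sqrt (c 0 ^ 2 + (k : ℝ) ^ 2)
      + (m : ℝ) * Real.sqrt ((k : ℝ) ^ 2 + c 0 ^ 2) := by
    rw [hS0def, Fin.sum_univ_succ]
    simp only [Fin.succ_ne_zero, false_or, eq_self_iff_true, true_or, if_true]
    rw [Fin.sum_univ_succ]
    simp [Fin.sum_univ_succ, Fin.succ_ne_zero, hcs, Finset.sum_const, mul_comm]
  have hAdjSum : (∑ u : V, ∑ v : V, (if G.Adj u v then S0 else 0))
      = (Fintype.card V : ℝ) * ((k : ℝ) * S0) := by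
    have : ∀ u : V, (∑ v : V, (if G.Adj u v then S0 else 0)) = (k : ℝ) * S0 := by
      intro u
      rw [← Finset.sum_filter, Finset.sum_const,
        ← SimpleGraph.neighborFinset_eq_filter, SimpleGraph.card_neighborFinset_eq_degree,
        hreg u, nsmul_eq_mul]
    rw [Finset.sum_congr rfl fun u _ => this u, Finset.sum_const, nsmul_eq_mul,
      Finset.card_univ]
  rw [hSI, hT, hAdjSum, hS0, hc0]
  have hknn : (0 : ℝ) ≤ (k : ℝ) := Nat.cast_nonneg k
  have hann : (0 : ℝ) ≤ ((m : ℝ) + 1) * k := by positivity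
  have e1 : Real.sqrt ((((m : ℝ) + 1) * k) ^ 2 + (((m : ℝ) + 1) * k) ^ 2)
      = Real.sqrt 2 * (((m : ℝ) + 1) * k) := by
    rw [show (((m : ℝ) + 1) * k) ^ 2 + (((m : ℝ) + 1) * k) ^ 2
        = 2 * (((m : ℝ) + 1) * k) ^ 2 by ring,
      Real.sqrt_mul (by norm_num), Real.sqrt_sq hann]
  have e2 : Real.sqrt ((((m : ℝ) + 1) * k) ^ 2 + (k : ℝ) ^ 2)
      = (k : ℝ) * Real.sqrt ((m : ℝ) ^ 2 + 2 * m + 2) := by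
    rw [show (((m : ℝ) + 1) * k) ^ 2 + (k : ℝ) ^ 2
        = (k : ℝ) ^ 2 * ((m : ℝ) ^ 2 + 2 * m + 2) by ring,
      Real.sqrt_mul (sq_nonneg _), Real.sqrt_sq hknn]
  have e3 : Real.sqrt ((k : ℝ) ^ 2 + (((m : ℝ) + 1) * k) ^ 2)
      = (k : ℝ) * Real.sqrt ((m : ℝ) ^ 2 + 2 * m + 2) := by
    rw [add_comm]; exact e2
  have e4 : Real.sqrt (2 * (m : ℝ) ^ 2 + 4 * m + 4)
      = Real.sqrt 2 * Real.sqrt ((m : ℝ) ^ 2 + 2 * m + 2) := by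
    rw [show 2 * (m : ℝ) ^ 2 + 4 * m + 4 = 2 * ((m : ℝ) ^ 2 + 2 * m + 2) by ring,
      Real.sqrt_mul (by norm_num)]
  rw [e1, e2, e3, e4]
  have hs2 : Real.sqrt 2 * Real.sqrt 2 = 2 := Real.mul_self_sqrt (by norm_num)
  have hs2ne : Real.sqrt 2 ≠ 0 := by positivity
  rw [div_mul_eq_mul_div, div_eq_div_iff (by norm_num : (2:ℝ) ≠ 0) hs2ne]
  linear_combination ((Fintype.card V : ℝ) * (k : ℝ) ^ 2 * ((m : ℝ) + 1)) * hs2
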